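/- arXiv:1806.08142 — 3 statements merged into one kernel-verified Lean document; each statement's English description precedes it below -/
import Mathlib

section
/- Let π be a Poisson tensor on ℝ^N that does not depend on the variable x_p for some fixed 1 ≤ p ≤ N, and let c be a Casimir function for π. Then the 2N×2N antisymmetric matrix field on ℝ^{2N} given in blocks by Π^{xx}(x,y) = 0, Π^{xy}(x,y) = π(x) + c(x)·E_pp, Π^{yx}(x,y) = π(x) − c(x)·E_pp, Π^{yy}(x,y) = ∑_{s=1}^N (∂π/∂x_s)(x) y_s is a Poisson tensor on ℝ^{2N} (denoted Π_{TM,c(x)}). -/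
open scoped ContDiff

/-- Partial derivative `∂f/∂z_s` at `z`, for functions on `ℝ^ι`. -/
noncomputable def pd {ι : Type} [Fintype ι] [DecidableEq ι]
    (s : ι) (f : (ι → ℝ) → ℝ) (x : ι → ℝ) : ℝ :=
  fderiv ℝ f x (Pi.single s 1)

/-- A Poisson tensor on `ℝ^ι`: a smooth antisymmetric matrix field satisfying the
Jacobi condition. -/
def IsPoissonTensor {ι : Type} [Fintype ι] [DecidableEq ι]
    (π : (ι → ℝ) → Matrix ι ι ℝ) : Prop :=
  (∀ i j, ContDiff ℝ ∞ fun x => π x i j) ∧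
  (∀ x i j, π x j i = - π x i j) ∧
  (∀ x i j k, ∑ s, (pd s (fun y => π y i j) x * π x s k
      + pd s (fun y => π y k i) x * π x s j
      + pd s (fun y => π y j k) x * π x s i) = 0)

/-- `c` is a (smooth) Casimir function for `π`. -/
def IsCasimir {ι : Type} [Fintype ι] [DecidableEq ι]
    (π : (ι → ℝ) → Matrix ι ι ℝ) (c : (ι → ℝ) → ℝ) : Prop :=
  ContDiff ℝ ∞ c ∧ ∀ x j, ∑ s, pd s c x * π x s j = 0

/-- The matrix of partial derivatives `(∂π_{ij}/∂x_s)(x)`. -/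
noncomputable def pdMat {N : ℕ} (s : Fin N)
    (π : (Fin N → ℝ) → Matrix (Fin N) (Fin N) ℝ) (x : Fin N → ℝ) :
    Matrix (Fin N) (Fin N) ℝ :=
  Matrix.of fun i j => pd s (fun y => π y i j) x

/-- The `x`-part of a point `z = (x,y) ∈ ℝ^{2N}`. -/
def Xc {N : ℕ} (z : (Fin N ⊕ Fin N) → ℝ) : Fin N → ℝ := fun i => z (Sum.inl i)

/-- The `y`-part of a point `z = (x,y) ∈ ℝ^{2N}`. -/
def Yc {N : ℕ} (z : (Fin N ⊕ Fin N) → ℝ) : Fin N → ℝ := fun i => z (Sum.inr i)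

section basic
variable {ι : Type} [Fintype ι] [DecidableEq ι] {f g : (ι → ℝ) → ℝ} {x : ι → ℝ} {s : ι}

lemma pd_add (hf : DifferentiableAt ℝ f x) (hg : DifferentiableAt ℝ g x) :
    pd s (fun y => f y + g y) x = pd s f x + pd s g x := by
  unfold pd; rw [fderiv_fun_add hf hg]; rfl

lemma pd_neg : pd s (fun y => -f y) x = - pd s f x := by
  unfold pd; rw [fderiv_fun_neg]; rfl

lemma pd_const (a : ℝ) : pd s (fun _ => a) x = 0 := by
  unfold pd; rw [fderiv_fun_const]; rfl

lemma pd_mul (hf : DifferentiableAt ℝ f x) (hg : DifferentiableAt ℝ g x) :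
    pd s (fun y => f y * g y) x = pd s f x * g x + f x * pd s g x := by
  unfold pd; rw [fderiv_fun_mul hf hg]; simp; ring

lemma pd_sum {α : Type} (t : Finset α) (F : α → (ι → ℝ) → ℝ)
    (hF : ∀ a ∈ t, DifferentiableAt ℝ (F a) x) :
    pd s (fun y => ∑ a ∈ t, F a y) x = ∑ a ∈ t, pd s (F a) x := by
  unfold pd; rw [fderiv_fun_sum hF]; simp

lemma contDiff_pd (hf : ContDiff ℝ ∞ f) : ContDiff ℝ ∞ (fun y => pd s f y) := by
  exact (hf.fderiv_right (m := ∞) (le_of_eq rfl)).clm_apply contDiff_const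

lemma pd_pd_symm (hf : ContDiff ℝ ∞ f) (s u : ι) (x : ι → ℝ) :
    pd s (fun y => pd u f y) x = pd u (fun y => pd s f y) x := by
  have hd : DifferentiableAt ℝ (fderiv ℝ f) x := by
    have := (hf.fderiv_right (m := ∞) (le_of_eq rfl)).differentiable (by norm_cast)
    exact this x
  have key : ∀ v w : ι → ℝ, fderiv ℝ (fun y => fderiv ℝ f y w) x v
      = fderiv ℝ (fderiv ℝ f) x v w := by
    intro v w
    rw [show (fun y => fderiv ℝ f y w) = fun y => (fderiv ℝ f y) ((fun _ => w) y) from rfl]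
    rw [fderiv_clm_apply hd (differentiableAt_const _)]
    simp
  have hsym : IsSymmSndFDerivAt ℝ f x :=
    (hf.contDiffAt).isSymmSndFDerivAt (by simp; norm_cast)
  unfold pd
  rw [key, key, hsym.eq]
end basic

section sumtype
variable {N : ℕ}

noncomputable def XcL (N : ℕ) : (((Fin N ⊕ Fin N) → ℝ)) →L[ℝ] (Fin N → ℝ) :=
  ContinuousLinearMap.pi (fun i => ContinuousLinearMap.proj (Sum.inl i))

lemma XcL_apply (z : (Fin N ⊕ Fin N) → ℝ) : XcL N z = Xc z := rfl

lemma XcL_single_inl (s : Fin N) : XcL N (Pi.single (Sum.inl s) 1) = Pi.single s 1 := by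
  funext i
  simp [XcL, Pi.single_apply]

lemma XcL_single_inr (s : Fin N) : XcL N (Pi.single (Sum.inr s) 1) = 0 := by
  funext i
  simp [XcL, Pi.single_apply]

lemma diff_comp_Xc {h : (Fin N → ℝ) → ℝ} (hh : Differentiable ℝ h)
    (z : (Fin N ⊕ Fin N) → ℝ) : DifferentiableAt ℝ (fun w => h (Xc w)) z :=
  ((hh (Xc z)).comp z (XcL N).differentiableAt : DifferentiableAt ℝ (h ∘ XcL N) z)

lemma contDiff_comp_Xc {h : (Fin N → ℝ) → ℝ} (hh : ContDiff ℝ ∞ h) :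
    ContDiff ℝ ∞ (fun w : (Fin N ⊕ Fin N) → ℝ => h (Xc w)) :=
  hh.comp (XcL N).contDiff

lemma fderiv_comp_Xc {h : (Fin N → ℝ) → ℝ} (hh : Differentiable ℝ h)
    (z : (Fin N ⊕ Fin N) → ℝ) (v : (Fin N ⊕ Fin N) → ℝ) :
    fderiv ℝ (fun w => h (Xc w)) z v = fderiv ℝ h (Xc z) (XcL N v) := by
  have : (fun w => h (Xc w)) = h ∘ (XcL N) := rfl
  rw [this, fderiv_comp z (hh (XcL N z)) (XcL N).differentiableAt]
  simp only [ContinuousLinearMap.fderiv, ContinuousLinearMap.coe_comp', Function.comp_apply]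
  rfl

lemma pd_comp_Xc_inl {h : (Fin N → ℝ) → ℝ} (hh : Differentiable ℝ h)
    (z : (Fin N ⊕ Fin N) → ℝ) (s : Fin N) :
    pd (Sum.inl s) (fun w => h (Xc w)) z = pd s h (Xc z) := by
  unfold pd; rw [fderiv_comp_Xc hh, XcL_single_inl]

lemma pd_comp_Xc_inr {h : (Fin N → ℝ) → ℝ} (hh : Differentiable ℝ h)
    (z : (Fin N ⊕ Fin N) → ℝ) (s : Fin N) :
    pd (Sum.inr s) (fun w => h (Xc w)) z = 0 := by
  unfold pd; rw [fderiv_comp_Xc hh, XcL_single_inr]; simp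

lemma pd_proj {ι : Type} [Fintype ι] [DecidableEq ι] (J S : ι) (z : ι → ℝ) :
    pd S (fun w => w J) z = if J = S then 1 else 0 := by
  have : (fun w : ι → ℝ => w J) = (ContinuousLinearMap.proj J :
      (ι → ℝ) →L[ℝ] ℝ) := rfl
  unfold pd
  rw [this, ContinuousLinearMap.fderiv]
  simp [Pi.single_apply]

lemma diff_proj {ι : Type} [Fintype ι] [DecidableEq ι] (J : ι) (z : ι → ℝ) :
    DifferentiableAt ℝ (fun w : ι → ℝ => w J) z :=
  (ContinuousLinearMap.proj J : (ι → ℝ) →L[ℝ] ℝ).differentiableAt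

end sumtype

section basic2
variable {ι : Type} [Fintype ι] [DecidableEq ι] {f g : (ι → ℝ) → ℝ} {x : ι → ℝ} {s : ι}

lemma pd_sub (hf : DifferentiableAt ℝ f x) (hg : DifferentiableAt ℝ g x) :
    pd s (fun y => f y - g y) x = pd s f x - pd s g x := by
  unfold pd; rw [fderiv_fun_sub hf hg]; rfl

lemma pd_mul_const (hf : DifferentiableAt ℝ f x) (a : ℝ) :
    pd s (fun y => f y * a) x = pd s f x * a := by
  unfold pd; rw [fderiv_mul_const hf]; simp [mul_comm]
end basic2

section lift
variable {N : ℕ} (π : (Fin N → ℝ) → Matrix (Fin N) (Fin N) ℝ) (p : Fin N)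
  (c : (Fin N → ℝ) → ℝ)

noncomputable def lift : ((Fin N ⊕ Fin N) → ℝ) → Matrix (Fin N ⊕ Fin N) (Fin N ⊕ Fin N) ℝ :=
  fun z => Matrix.fromBlocks 0
    (π (Xc z) + c (Xc z) • Matrix.single p p (1 : ℝ))
    (π (Xc z) - c (Xc z) • Matrix.single p p (1 : ℝ))
    (∑ s, Yc z s • pdMat s π (Xc z))

variable {π c}

lemma lift_ll (z) (i j : Fin N) : lift π p c z (Sum.inl i) (Sum.inl j) = 0 := by
  simp [lift]

lemma lift_lr (z) (i j : Fin N) : lift π p c z (Sum.inl i) (Sum.inr j)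
    = π (Xc z) i j + c (Xc z) * Matrix.single p p (1 : ℝ) i j := by
  simp only [lift, Matrix.fromBlocks_apply₁₂, Matrix.add_apply, Matrix.smul_apply, smul_eq_mul]

lemma lift_rl (z) (i j : Fin N) : lift π p c z (Sum.inr i) (Sum.inl j)
    = π (Xc z) i j - c (Xc z) * Matrix.single p p (1 : ℝ) i j := by
  simp only [lift, Matrix.fromBlocks_apply₂₁, Matrix.sub_apply, Matrix.smul_apply, smul_eq_mul]

lemma lift_rr (z) (i j : Fin N) : lift π p c z (Sum.inr i) (Sum.inr j)
    = ∑ u, Yc z u * pd u (fun y => π y i j) (Xc z) := by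
  simp [lift, pdMat, Matrix.sum_apply]

variable (hπs : ∀ i j, ContDiff ℝ ∞ fun x => π x i j) (hcs : ContDiff ℝ ∞ c)
include hπs hcs

lemma pd_lift_lr_inl (z) (s i j : Fin N) :
    pd (Sum.inl s) (fun w => π (Xc w) i j
        + c (Xc w) * Matrix.single p p (1 : ℝ) i j) z
    = pd s (fun y => π y i j) (Xc z)
      + pd s c (Xc z) * Matrix.single p p (1 : ℝ) i j := by
  have hd : Differentiable ℝ (fun y => π y i j) := (hπs i j).differentiable (by norm_cast)
  have hcd : Differentiable ℝ c := hcs.differentiable (by norm_cast)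
  rw [pd_add (diff_comp_Xc hd z) ((diff_comp_Xc hcd z).mul_const _),
    pd_mul_const (diff_comp_Xc hcd z), pd_comp_Xc_inl hd, pd_comp_Xc_inl hcd]

lemma pd_lift_lr_inr (z) (s i j : Fin N) :
    pd (Sum.inr s) (fun w => π (Xc w) i j
        + c (Xc w) * Matrix.single p p (1 : ℝ) i j) z = 0 := by
  have hd : Differentiable ℝ (fun y => π y i j) := (hπs i j).differentiable (by norm_cast)
  have hcd : Differentiable ℝ c := hcs.differentiable (by norm_cast)
  rw [pd_add (diff_comp_Xc hd z) ((diff_comp_Xc hcd z).mul_const _),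
    pd_mul_const (diff_comp_Xc hcd z), pd_comp_Xc_inr hd, pd_comp_Xc_inr hcd]
  ring

lemma pd_lift_rl_inl (z) (s i j : Fin N) :
    pd (Sum.inl s) (fun w => π (Xc w) i j
        - c (Xc w) * Matrix.single p p (1 : ℝ) i j) z
    = pd s (fun y => π y i j) (Xc z)
      - pd s c (Xc z) * Matrix.single p p (1 : ℝ) i j := by
  have hd : Differentiable ℝ (fun y => π y i j) := (hπs i j).differentiable (by norm_cast)
  have hcd : Differentiable ℝ c := hcs.differentiable (by norm_cast)
  rw [pd_sub (diff_comp_Xc hd z) ((diff_comp_Xc hcd z).mul_const _),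
    pd_mul_const (diff_comp_Xc hcd z), pd_comp_Xc_inl hd, pd_comp_Xc_inl hcd]

lemma pd_lift_rl_inr (z) (s i j : Fin N) :
    pd (Sum.inr s) (fun w => π (Xc w) i j
        - c (Xc w) * Matrix.single p p (1 : ℝ) i j) z = 0 := by
  have hd : Differentiable ℝ (fun y => π y i j) := (hπs i j).differentiable (by norm_cast)
  have hcd : Differentiable ℝ c := hcs.differentiable (by norm_cast)
  rw [pd_sub (diff_comp_Xc hd z) ((diff_comp_Xc hcd z).mul_const _),
    pd_mul_const (diff_comp_Xc hcd z), pd_comp_Xc_inr hd, pd_comp_Xc_inr hcd]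
  ring

omit hcs

lemma pd_lift_rr_inl (z) (s i j : Fin N) :
    pd (Sum.inl s) (fun w => ∑ u, Yc w u * pd u (fun y => π y i j) (Xc w)) z
    = ∑ u, Yc z u * pd s (fun x => pd u (fun y => π y i j) x) (Xc z) := by
  have hg : ∀ u : Fin N, ContDiff ℝ ∞ (fun x => pd u (fun y => π y i j) x) :=
    fun u => contDiff_pd (hπs i j)
  simp only [Yc]
  rw [pd_sum _ _ (fun u _ => (diff_proj (Sum.inr u) z).fun_mul
    (diff_comp_Xc ((hg u).differentiable (by norm_cast)) z))]
  refine Finset.sum_congr rfl fun u _ => ?_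
  rw [pd_mul (diff_proj (Sum.inr u) z)
    (diff_comp_Xc ((hg u).differentiable (by norm_cast)) z),
    pd_proj, pd_comp_Xc_inl ((hg u).differentiable (by norm_cast))]
  simp [Yc]

lemma pd_lift_rr_inr (z) (s i j : Fin N) :
    pd (Sum.inr s) (fun w => ∑ u, Yc w u * pd u (fun y => π y i j) (Xc w)) z
    = pd s (fun y => π y i j) (Xc z) := by
  have hg : ∀ u : Fin N, ContDiff ℝ ∞ (fun x => pd u (fun y => π y i j) x) :=
    fun u => contDiff_pd (hπs i j)
  simp only [Yc]
  rw [pd_sum _ _ (fun u _ => (diff_proj (Sum.inr u) z).fun_mul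
    (diff_comp_Xc ((hg u).differentiable (by norm_cast)) z))]
  have : ∀ u ∈ Finset.univ, pd (Sum.inr s)
      (fun w => w (Sum.inr u) * pd u (fun y => π y i j) (Xc w)) z
      = if u = s then pd u (fun y => π y i j) (Xc z) else 0 := by
    intro u _
    rw [pd_mul (diff_proj (Sum.inr u) z)
      (diff_comp_Xc ((hg u).differentiable (by norm_cast)) z),
      pd_proj, pd_comp_Xc_inr ((hg u).differentiable (by norm_cast))]
    simp [Sum.inr.injEq, eq_comm]
  rw [Finset.sum_congr rfl this]
  simp

omit hπs in
lemma pd_lift_ll (z) (S : Fin N ⊕ Fin N) (i j : Fin N) :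
    pd S (fun w => lift π p c w (Sum.inl i) (Sum.inl j)) z = 0 := by
  have e : (fun w => lift π p c w (Sum.inl i) (Sum.inl j)) = fun _ => (0 : ℝ) :=
    funext fun w => lift_ll p w i j
  rw [e, pd_const]

end lift

section helpers
variable {N : ℕ} (p : Fin N)

lemma sumM (f : Fin N → ℝ) (k : Fin N) :
    ∑ s, f s * Matrix.single p p (1 : ℝ) s k = if p = k then f p else 0 := by
  simp only [Matrix.single, Matrix.of_apply, mul_ite, mul_one, mul_zero]
  by_cases h : p = k
  · subst h; simp [Finset.sum_ite_eq]
  · simp [h]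

lemma Mprod (i j k s : Fin N) :
    Matrix.single p p (1 : ℝ) i j * Matrix.single p p 1 s k
    = Matrix.single p p (1 : ℝ) k i * Matrix.single p p 1 s j := by
  have key : ∀ a b e f : Fin N,
      Matrix.single p p (1 : ℝ) a b * Matrix.single p p 1 e f
      = if p = a ∧ p = b ∧ p = e ∧ p = f then 1 else 0 := by
    intro a b e f
    simp only [Matrix.single, Matrix.of_apply]
    by_cases h1 : p = a <;> by_cases h2 : p = b <;> by_cases h3 : p = e <;>
      by_cases h4 : p = f <;> simp [h1, h2, h3, h4] <;> split_ifs <;> try simp_all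
    all_goals (rename_i hh; first
      | exact ‹¬b = f› (hh.1.symm.trans hh.2)
      | exact ‹¬b = e› (hh.1.symm.trans hh.2.1))
  rw [key, key]
  exact if_congr (by tauto) rfl rfl

end helpers

section derived
variable {N : ℕ} {π : (Fin N → ℝ) → Matrix (Fin N) (Fin N) ℝ}
  (hπs : ∀ i j, ContDiff ℝ ∞ fun x => π x i j)
include hπs

lemma pd_pd_p (p : Fin N) (hp : ∀ x i j, pd p (fun y => π y i j) x = 0)
    (u i j : Fin N) (x : Fin N → ℝ) :
    pd p (fun y => pd u (fun y' => π y' i j) y) x = 0 := by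
  rw [pd_pd_symm (hπs i j) p u x]
  have e : (fun y => pd p (fun y' => π y' i j) y) = fun _ => (0 : ℝ) :=
    funext fun y => hp y i j
  rw [e, pd_const]

lemma diffJacobi
    (hπj : ∀ x (i j k : Fin N), ∑ s, (pd s (fun y => π y i j) x * π x s k
      + pd s (fun y => π y k i) x * π x s j
      + pd s (fun y => π y j k) x * π x s i) = 0)
    (u : Fin N) (x : Fin N → ℝ) (i j k : Fin N) :
    ∑ s, (pd u (fun y => pd s (fun y' => π y' i j) y) x * π x s k
        + pd s (fun y => π y i j) x * pd u (fun y => π y s k) x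
        + pd u (fun y => pd s (fun y' => π y' k i) y) x * π x s j
        + pd s (fun y => π y k i) x * pd u (fun y => π y s j) x
        + pd u (fun y => pd s (fun y' => π y' j k) y) x * π x s i
        + pd s (fun y => π y j k) x * pd u (fun y => π y s i) x) = 0 := by
  have hd : ∀ a b, Differentiable ℝ (fun y => π y a b) :=
    fun a b => (hπs a b).differentiable (by norm_cast)
  have hgd : ∀ (s a b : Fin N), Differentiable ℝ (fun y => pd s (fun y' => π y' a b) y) :=
    fun s a b => (contDiff_pd (hπs a b)).differentiable (by norm_cast)
  have dms : ∀ (s a b e f : Fin N),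
      DifferentiableAt ℝ (fun y => pd s (fun y' => π y' a b) y * π y e f) x :=
    fun s a b e f => (hgd s a b x).mul (hd e f x)
  have e1 : pd u (fun x => ∑ s, (pd s (fun y => π y i j) x * π x s k
      + pd s (fun y => π y k i) x * π x s j
      + pd s (fun y => π y j k) x * π x s i)) x
      = ∑ s, (pd u (fun y => pd s (fun y' => π y' i j) y) x * π x s k
        + pd s (fun y => π y i j) x * pd u (fun y => π y s k) x
        + pd u (fun y => pd s (fun y' => π y' k i) y) x * π x s j
        + pd s (fun y => π y k i) x * pd u (fun y => π y s j) x
        + pd u (fun y => pd s (fun y' => π y' j k) y) x * π x s i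
        + pd s (fun y => π y j k) x * pd u (fun y => π y s i) x) := by
    rw [pd_sum _ _ (fun s _ => ((dms s i j s k).fun_add (dms s k i s j)).fun_add (dms s j k s i))]
    refine Finset.sum_congr rfl fun s _ => ?_
    rw [pd_add ((dms s i j s k).fun_add (dms s k i s j)) (dms s j k s i),
      pd_add (dms s i j s k) (dms s k i s j),
      pd_mul (hgd s i j x) (hd s k x),
      pd_mul (hgd s k i x) (hd s j x),
      pd_mul (hgd s j k x) (hd s i x)]
    ring
  have e0 : (fun x => ∑ s, (pd s (fun y => π y i j) x * π x s k
      + pd s (fun y => π y k i) x * π x s j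
      + pd s (fun y => π y j k) x * π x s i)) = fun _ => (0 : ℝ) :=
    funext fun x => hπj x i j k
  rw [← e1, e0, pd_const]

end derived

section cases
variable {N : ℕ} {π : (Fin N → ℝ) → Matrix (Fin N) (Fin N) ℝ} {c : (Fin N → ℝ) → ℝ}
  (p : Fin N)
  (hπs : ∀ i j, ContDiff ℝ ∞ fun x => π x i j)
  (hπj : ∀ x (i j k : Fin N), ∑ s, (pd s (fun y => π y i j) x * π x s k
      + pd s (fun y => π y k i) x * π x s j
      + pd s (fun y => π y j k) x * π x s i) = 0)
  (hp : ∀ x i j, pd p (fun y => π y i j) x = 0)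
  (hcs : ContDiff ℝ ∞ c)
  (hcz : ∀ x j, ∑ s, pd s c x * π x s j = 0)

lemma jac_lll (z) (i j k : Fin N) :
    ∑ S, (pd S (fun w => lift π p c w (Sum.inl i) (Sum.inl j)) z * lift π p c z S (Sum.inl k)
      + pd S (fun w => lift π p c w (Sum.inl k) (Sum.inl i)) z * lift π p c z S (Sum.inl j)
      + pd S (fun w => lift π p c w (Sum.inl j) (Sum.inl k)) z * lift π p c z S (Sum.inl i))
      = 0 := by
  simp [pd_lift_ll p]

include hπs hcs in
lemma jac_llr (z) (i j k : Fin N) :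
    ∑ S, (pd S (fun w => lift π p c w (Sum.inl i) (Sum.inl j)) z * lift π p c z S (Sum.inr k)
      + pd S (fun w => lift π p c w (Sum.inr k) (Sum.inl i)) z * lift π p c z S (Sum.inl j)
      + pd S (fun w => lift π p c w (Sum.inl j) (Sum.inr k)) z * lift π p c z S (Sum.inl i))
      = 0 := by
  rw [Fintype.sum_sum_type]
  simp [pd_const, pd_lift_ll p, lift_ll p, lift_lr p, lift_rl p,
    pd_lift_rl_inr p hπs hcs, pd_lift_lr_inr p hπs hcs]

include hπs hπj hp hcs hcz in
lemma jac_lrr (z) (i j k : Fin N) :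
    ∑ S, (pd S (fun w => lift π p c w (Sum.inl i) (Sum.inr j)) z * lift π p c z S (Sum.inr k)
      + pd S (fun w => lift π p c w (Sum.inr k) (Sum.inl i)) z * lift π p c z S (Sum.inr j)
      + pd S (fun w => lift π p c w (Sum.inr j) (Sum.inr k)) z * lift π p c z S (Sum.inl i))
      = 0 := by
  rw [Fintype.sum_sum_type]
  simp only [pd_lift_lr_inl p hπs hcs, pd_lift_rl_inl p hπs hcs, pd_lift_rr_inl hπs,
    pd_lift_lr_inr p hπs hcs, pd_lift_rl_inr p hπs hcs, pd_lift_rr_inr hπs,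
    lift_ll p, lift_lr p, lift_rl p, lift_rr p, mul_zero, zero_mul, add_zero, zero_add]
  rw [← Finset.sum_add_distrib]
  set x := Xc z with hx
  trans (∑ s, ((pd s (fun y => π y i j) x * π x s k + pd s (fun y => π y k i) x * π x s j
      + pd s (fun y => π y j k) x * π x s i)
    + c x * (pd s (fun y => π y i j) x * Matrix.single p p (1 : ℝ) s k
      + pd s (fun y => π y k i) x * Matrix.single p p (1 : ℝ) s j
      - pd s (fun y => π y j k) x * Matrix.single p p (1 : ℝ) s i)
    + (Matrix.single p p (1 : ℝ) i j * (pd s c x * π x s k)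
      - Matrix.single p p (1 : ℝ) k i * (pd s c x * π x s j))
    + pd s c x * c x * (Matrix.single p p (1 : ℝ) i j
        * Matrix.single p p (1 : ℝ) s k
      - Matrix.single p p (1 : ℝ) k i * Matrix.single p p (1 : ℝ) s j)))
  · exact Finset.sum_congr rfl fun s _ => by ring
  rw [Finset.sum_add_distrib, Finset.sum_add_distrib, Finset.sum_add_distrib]
  have E1 : ∑ s, (pd s (fun y => π y i j) x * π x s k + pd s (fun y => π y k i) x * π x s j
      + pd s (fun y => π y j k) x * π x s i) = 0 := hπj x i j k
  have E2 : ∑ s, c x * (pd s (fun y => π y i j) x * Matrix.single p p (1 : ℝ) s k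
      + pd s (fun y => π y k i) x * Matrix.single p p (1 : ℝ) s j
      - pd s (fun y => π y j k) x * Matrix.single p p (1 : ℝ) s i) = 0 := by
    rw [← Finset.mul_sum, Finset.sum_sub_distrib, Finset.sum_add_distrib,
      sumM p, sumM p, sumM p]
    simp [hp]
  have E3 : ∑ s, (Matrix.single p p (1 : ℝ) i j * (pd s c x * π x s k)
      - Matrix.single p p (1 : ℝ) k i * (pd s c x * π x s j)) = 0 := by
    rw [Finset.sum_sub_distrib, ← Finset.mul_sum, ← Finset.mul_sum, hcz x k, hcz x j]
    simp
  have E4 : ∑ s, pd s c x * c x * (Matrix.single p p (1 : ℝ) i j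
        * Matrix.single p p (1 : ℝ) s k
      - Matrix.single p p (1 : ℝ) k i * Matrix.single p p (1 : ℝ) s j) = 0 := by
    refine Finset.sum_eq_zero fun s _ => ?_
    rw [Mprod p i j k s]
    ring
  rw [E1, E2, E3, E4]
  norm_num

include hπs hπj hp in
lemma jac_rrr (z) (i j k : Fin N) :
    ∑ S, (pd S (fun w => lift π p c w (Sum.inr i) (Sum.inr j)) z * lift π p c z S (Sum.inr k)
      + pd S (fun w => lift π p c w (Sum.inr k) (Sum.inr i)) z * lift π p c z S (Sum.inr j)
      + pd S (fun w => lift π p c w (Sum.inr j) (Sum.inr k)) z * lift π p c z S (Sum.inr i))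
      = 0 := by
  rw [Fintype.sum_sum_type]
  simp only [pd_lift_rr_inl hπs, pd_lift_rr_inr hπs, lift_lr p, lift_rr p]
  rw [← Finset.sum_add_distrib]
  trans (∑ s, ∑ u, Yc z u *
      (pd s (fun x' => pd u (fun y => π y i j) x') (Xc z) * π (Xc z) s k
      + pd s (fun y => π y i j) (Xc z) * pd u (fun y => π y s k) (Xc z)
      + pd s (fun x' => pd u (fun y => π y k i) x') (Xc z) * π (Xc z) s j
      + pd s (fun y => π y k i) (Xc z) * pd u (fun y => π y s j) (Xc z)
      + pd s (fun x' => pd u (fun y => π y j k) x') (Xc z) * π (Xc z) s i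
      + pd s (fun y => π y j k) (Xc z) * pd u (fun y => π y s i) (Xc z)
      + c (Xc z) * (pd s (fun x' => pd u (fun y => π y i j) x') (Xc z)
          * Matrix.single p p (1 : ℝ) s k
        + pd s (fun x' => pd u (fun y => π y k i) x') (Xc z)
          * Matrix.single p p (1 : ℝ) s j
        + pd s (fun x' => pd u (fun y => π y j k) x') (Xc z)
          * Matrix.single p p (1 : ℝ) s i)))
  · refine Finset.sum_congr rfl fun s _ => ?_
    rw [Finset.sum_mul, Finset.sum_mul, Finset.sum_mul, Finset.mul_sum, Finset.mul_sum,
      Finset.mul_sum, ← Finset.sum_add_distrib, ← Finset.sum_add_distrib,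
      ← Finset.sum_add_distrib, ← Finset.sum_add_distrib, ← Finset.sum_add_distrib]
    exact Finset.sum_congr rfl fun u _ => by ring
  rw [Finset.sum_comm]
  refine Finset.sum_eq_zero fun u _ => ?_
  rw [← Finset.mul_sum]
  have EA : ∑ s, (pd s (fun x' => pd u (fun y => π y i j) x') (Xc z) * π (Xc z) s k
      + pd s (fun y => π y i j) (Xc z) * pd u (fun y => π y s k) (Xc z)
      + pd s (fun x' => pd u (fun y => π y k i) x') (Xc z) * π (Xc z) s j
      + pd s (fun y => π y k i) (Xc z) * pd u (fun y => π y s j) (Xc z)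
      + pd s (fun x' => pd u (fun y => π y j k) x') (Xc z) * π (Xc z) s i
      + pd s (fun y => π y j k) (Xc z) * pd u (fun y => π y s i) (Xc z)) = 0 := by
    rw [Finset.sum_congr rfl (fun s _ => by
      rw [pd_pd_symm (hπs i j) s u (Xc z), pd_pd_symm (hπs k i) s u (Xc z),
        pd_pd_symm (hπs j k) s u (Xc z)])]
    exact diffJacobi hπs hπj u (Xc z) i j k
  have EB : ∑ s, c (Xc z) * (pd s (fun x' => pd u (fun y => π y i j) x') (Xc z)
          * Matrix.single p p (1 : ℝ) s k
        + pd s (fun x' => pd u (fun y => π y k i) x') (Xc z)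
          * Matrix.single p p (1 : ℝ) s j
        + pd s (fun x' => pd u (fun y => π y j k) x') (Xc z)
          * Matrix.single p p (1 : ℝ) s i) = 0 := by
    rw [← Finset.mul_sum, Finset.sum_add_distrib, Finset.sum_add_distrib,
      sumM p, sumM p, sumM p]
    simp [pd_pd_p hπs p hp]
  have split : ∑ s, ((pd s (fun x' => pd u (fun y => π y i j) x') (Xc z) * π (Xc z) s k
      + pd s (fun y => π y i j) (Xc z) * pd u (fun y => π y s k) (Xc z)
      + pd s (fun x' => pd u (fun y => π y k i) x') (Xc z) * π (Xc z) s j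
      + pd s (fun y => π y k i) (Xc z) * pd u (fun y => π y s j) (Xc z)
      + pd s (fun x' => pd u (fun y => π y j k) x') (Xc z) * π (Xc z) s i
      + pd s (fun y => π y j k) (Xc z) * pd u (fun y => π y s i) (Xc z))
      + c (Xc z) * (pd s (fun x' => pd u (fun y => π y i j) x') (Xc z)
          * Matrix.single p p (1 : ℝ) s k
        + pd s (fun x' => pd u (fun y => π y k i) x') (Xc z)
          * Matrix.single p p (1 : ℝ) s j
        + pd s (fun x' => pd u (fun y => π y j k) x') (Xc z)
          * Matrix.single p p (1 : ℝ) s i)) = 0 := by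
    rw [Finset.sum_add_distrib, EA, EB]; norm_num
  rw [split, mul_zero]

end cases

lemma Msymm {N : ℕ} (p : Fin N) (i j : Fin N) :
    Matrix.single p p (1 : ℝ) j i = Matrix.single p p 1 i j := by
  simp only [Matrix.single, Matrix.of_apply]
  exact if_congr and_comm rfl rfl


/-- the deformed tangent lift `Π_{TM,c(x)}` is a Poisson tensor on `ℝ^{2N}`. -/
theorem stmt3 {N : ℕ} (hN : 1 ≤ N)
    (π : (Fin N → ℝ) → Matrix (Fin N) (Fin N) ℝ) (hπ : IsPoissonTensor π)
    (p : Fin N) (hp : ∀ x i j, pd p (fun y => π y i j) x = 0)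
    (c : (Fin N → ℝ) → ℝ) (hc : IsCasimir π c) :
    IsPoissonTensor (fun z : (Fin N ⊕ Fin N) → ℝ =>
      Matrix.fromBlocks
        0
        (π (Xc z) + c (Xc z) • Matrix.single p p (1 : ℝ))
        (π (Xc z) - c (Xc z) • Matrix.single p p (1 : ℝ))
        (∑ s, Yc z s • pdMat s π (Xc z))) := by
  obtain ⟨hπs, hπa, hπj⟩ := hπ
  obtain ⟨hcs, hcz⟩ := hc
  show IsPoissonTensor (lift π p c)
  refine ⟨?_, ?_, ?_⟩
  · -- smoothness
    rintro (i | i) (j | j)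
    · have e : (fun z => lift π p c z (Sum.inl i) (Sum.inl j)) = fun _ => (0 : ℝ) :=
        funext fun z => lift_ll p z i j
      rw [e]; exact contDiff_const
    · have e : (fun z => lift π p c z (Sum.inl i) (Sum.inr j))
          = fun z => π (Xc z) i j
            + c (Xc z) * Matrix.single p p (1 : ℝ) i j :=
        funext fun z => lift_lr p z i j
      rw [e]
      exact (contDiff_comp_Xc (hπs i j)).add ((contDiff_comp_Xc hcs).mul contDiff_const)
    · have e : (fun z => lift π p c z (Sum.inr i) (Sum.inl j))
          = fun z => π (Xc z) i j
            - c (Xc z) * Matrix.single p p (1 : ℝ) i j :=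
        funext fun z => lift_rl p z i j
      rw [e]
      exact (contDiff_comp_Xc (hπs i j)).sub ((contDiff_comp_Xc hcs).mul contDiff_const)
    · have e : (fun z => lift π p c z (Sum.inr i) (Sum.inr j))
          = fun z => ∑ u, z (Sum.inr u) * pd u (fun y => π y i j) (Xc z) :=
        funext fun z => lift_rr p z i j
      rw [e]
      exact ContDiff.sum fun u _ =>
        (ContinuousLinearMap.proj (Sum.inr u) :
            ((Fin N ⊕ Fin N) → ℝ) →L[ℝ] ℝ).contDiff.mul
          (contDiff_comp_Xc (contDiff_pd (hπs i j)))
  · -- antisymmetry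
    rintro z (i | i) (j | j)
    · simp [lift_ll p]
    · rw [lift_rl p, lift_lr p, hπa (Xc z) i j, Msymm p]; ring
    · rw [lift_lr p, lift_rl p, hπa (Xc z) i j, Msymm p]; ring
    · rw [lift_rr p, lift_rr p, ← Finset.sum_neg_distrib]
      refine Finset.sum_congr rfl fun u _ => ?_
      have e : (fun y => π y j i) = fun y => -π y i j := funext fun y => hπa y i j
      rw [e, pd_neg]; ring
  · -- Jacobi
    rintro z (i | i) (j | j) (k | k)
    · exact jac_lll p z i j k
    · exact jac_llr p hπs hcs z i j k
    · refine (Finset.sum_congr rfl fun S _ => by ring).trans (jac_llr p hπs hcs z k i j)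
    · exact jac_lrr p hπs hπj hp hcs hcz z i j k
    · refine (Finset.sum_congr rfl fun S _ => by ring).trans (jac_llr p hπs hcs z j k i)
    · refine (Finset.sum_congr rfl fun S _ => by ring).trans
        (jac_lrr p hπs hπj hp hcs hcz z j k i)
    · refine (Finset.sum_congr rfl fun S _ => by ring).trans
        (jac_lrr p hπs hπj hp hcs hcz z k i j)
    · exact jac_rrr p hπs hπj hp z i j k
end

section
/- Let π be a Poisson tensor on ℝ^N that does not depend on the variable x_p for some fixed 1 ≤ p ≤ N, let c be a Casimir function for π, and let c' be a Casimir function for π with ∂c'/∂x_p ≡ 0. Then the two functions on ℝ^{2N} given by F₁(x,y) = c'(x) and F₂(x,y) = ∑_{s=1}^N (∂c'/∂x_s)(x) y_s are Casimir functions for the Poisson tensor Π_{TM,c(x)} on ℝ^{2N} with blocks Π^{xx}=0, Π^{xy}=π(x)+c(x)E_pp, Π^{yx}=π(x)−c(x)E_pp, Π^{yy}=∑_s (∂π/∂x_s)(x) y_s. If moreover c is a linear Casimir function, then F₁ and F₂ are also Casimir functions for the Poisson tensor Π_{TM,c(y)} with the same blocks except that c(y) replaces c(x). -/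
open scoped ContDiff

/-- A linear function `c(x) = ∑ s, a_s x_s`. -/
def IsLinearFun {N : ℕ} (c : (Fin N → ℝ) → ℝ) : Prop :=
  ∃ a : Fin N → ℝ, ∀ x, c x = ∑ s, a s * x s

/-- The tensor `Π_{TM,c(x)}` on `ℝ^{2N}`. -/
noncomputable def tensorCX {N : ℕ} (π : (Fin N → ℝ) → Matrix (Fin N) (Fin N) ℝ)
    (p : Fin N) (c : (Fin N → ℝ) → ℝ) (z : (Fin N ⊕ Fin N) → ℝ) :
    Matrix (Fin N ⊕ Fin N) (Fin N ⊕ Fin N) ℝ :=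
  Matrix.fromBlocks
    0
    (π (Xc z) + c (Xc z) • Matrix.single p p (1 : ℝ))
    (π (Xc z) - c (Xc z) • Matrix.single p p (1 : ℝ))
    (∑ s, Yc z s • pdMat s π (Xc z))

/-- The tensor `Π_{TM,c(y)}` on `ℝ^{2N}`. -/
noncomputable def tensorCY {N : ℕ} (π : (Fin N → ℝ) → Matrix (Fin N) (Fin N) ℝ)
    (p : Fin N) (c : (Fin N → ℝ) → ℝ) (z : (Fin N ⊕ Fin N) → ℝ) :
    Matrix (Fin N ⊕ Fin N) (Fin N ⊕ Fin N) ℝ :=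
  Matrix.fromBlocks
    0
    (π (Xc z) + c (Yc z) • Matrix.single p p (1 : ℝ))
    (π (Xc z) - c (Yc z) • Matrix.single p p (1 : ℝ))
    (∑ s, Yc z s • pdMat s π (Xc z))

noncomputable def XL (N : ℕ) : ((Fin N ⊕ Fin N) → ℝ) →L[ℝ] (Fin N → ℝ) :=
  ContinuousLinearMap.pi fun i => ContinuousLinearMap.proj (Sum.inl i)

lemma Xc_eq {N : ℕ} (z : (Fin N ⊕ Fin N) → ℝ) : Xc z = XL N z := rfl

lemma XL_single_inl {N : ℕ} (i : Fin N) : XL N (Pi.single (Sum.inl i) (1:ℝ)) = Pi.single i 1 := by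
  funext k; simp [XL, Pi.single_apply]

lemma XL_single_inr {N : ℕ} (i : Fin N) : XL N (Pi.single (Sum.inr i) (1:ℝ)) = 0 := by
  funext k; simp [XL, Pi.single_apply]

lemma contDiff_pd_s5 {ι : Type} [Fintype ι] [DecidableEq ι] (s : ι) {f : (ι → ℝ) → ℝ}
    (hf : ContDiff ℝ ∞ f) : ContDiff ℝ ∞ (pd s f) :=
  (hf.fderiv_right (by simp)).clm_apply contDiff_const

lemma hasFDeriv_comp_Xc {N : ℕ} {f : (Fin N → ℝ) → ℝ} (hf : Differentiable ℝ f)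
    (z : (Fin N ⊕ Fin N) → ℝ) :
    HasFDerivAt (fun z => f (Xc z)) ((fderiv ℝ f (Xc z)).comp (XL N)) z :=
  ((hf (Xc z)).hasFDerivAt).comp z (XL N).hasFDerivAt

lemma pd_comp_inl {N : ℕ} {f : (Fin N → ℝ) → ℝ} (hf : Differentiable ℝ f)
    (z : (Fin N ⊕ Fin N) → ℝ) (i : Fin N) :
    pd (Sum.inl i) (fun z => f (Xc z)) z = pd i f (Xc z) := by
  show fderiv ℝ (fun z => f (Xc z)) z (Pi.single (Sum.inl i) 1) = _
  rw [(hasFDeriv_comp_Xc hf z).fderiv]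
  simp [XL_single_inl, pd]

lemma pd_comp_inr {N : ℕ} {f : (Fin N → ℝ) → ℝ} (hf : Differentiable ℝ f)
    (z : (Fin N ⊕ Fin N) → ℝ) (i : Fin N) :
    pd (Sum.inr i) (fun z => f (Xc z)) z = 0 := by
  show fderiv ℝ (fun z => f (Xc z)) z (Pi.single (Sum.inr i) 1) = _
  rw [(hasFDeriv_comp_Xc hf z).fderiv]
  simp [XL_single_inr]

lemma pd_pd {ι : Type} [Fintype ι] [DecidableEq ι] {f : (ι → ℝ) → ℝ}
    (hf : ContDiff ℝ ∞ f) (x : ι → ℝ) (i s : ι) :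
    pd i (pd s f) x = fderiv ℝ (fderiv ℝ f) x (Pi.single i 1) (Pi.single s 1) := by
  have hd : DifferentiableAt ℝ (fderiv ℝ f) x :=
    ((hf.fderiv_right (m := ∞) (by simp)).differentiable (by simp)).differentiableAt
  show fderiv ℝ (fun y => fderiv ℝ f y (Pi.single s 1)) x (Pi.single i 1) = _
  rw [fderiv_clm_apply hd (differentiableAt_const _)]
  simp

lemma pd_swap {ι : Type} [Fintype ι] [DecidableEq ι] {f : (ι → ℝ) → ℝ}
    (hf : ContDiff ℝ ∞ f) (x : ι → ℝ) (i s : ι) :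
    pd i (pd s f) x = pd s (pd i f) x := by
  rw [pd_pd hf x i s, pd_pd hf x s i]
  exact second_derivative_symmetric
    (fun y => ((hf.differentiable (by simp)) y).hasFDerivAt)
    (((hf.fderiv_right (m := ∞) (by simp)).differentiable (by simp)) x).hasFDerivAt _ _

lemma pd_zero_fun {ι : Type} [Fintype ι] [DecidableEq ι] {f : (ι → ℝ) → ℝ}
    (hf0 : ∀ x, f x = 0) (s : ι) (x : ι → ℝ) : pd s f x = 0 := by
  have : f = fun _ => 0 := funext hf0
  rw [this]
  simp [pd]

lemma pd_casimir {N : ℕ} {π : (Fin N → ℝ) → Matrix (Fin N) (Fin N) ℝ}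
    (hπs : ∀ i j, ContDiff ℝ ∞ fun x => π x i j) {f : (Fin N → ℝ) → ℝ}
    (hf : ContDiff ℝ ∞ f) (hcas : ∀ x j, ∑ i, pd i f x * π x i j = 0)
    (x : Fin N → ℝ) (s j : Fin N) :
    ∑ i, (pd s (pd i f) x * π x i j + pd i f x * pd s (fun y => π y i j) x) = 0 := by
  have H : HasFDerivAt (fun x => ∑ i, pd i f x * π x i j)
      (∑ i, (pd i f x • fderiv ℝ (fun y => π y i j) x + π x i j • fderiv ℝ (pd i f) x)) x := by
    apply HasFDerivAt.fun_sum
    intro i _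
    exact (((contDiff_pd_s5 i hf).differentiable (by simp)) x).hasFDerivAt.mul
      (((hπs i j).differentiable (by simp)) x).hasFDerivAt
  have h0 : (fun x => ∑ i, pd i f x * π x i j) = fun _ => (0:ℝ) :=
    funext fun x => hcas x j
  have hz : (∑ i, (pd i f x • fderiv ℝ (fun y => π y i j) x + π x i j • fderiv ℝ (pd i f) x)) = 0 := by
    have := H.fderiv
    rw [h0] at this
    rw [← this]
    simp
  have := congrArg (fun (L : ((Fin N → ℝ) →L[ℝ] ℝ)) => L (Pi.single s 1)) hz
  simp only [ContinuousLinearMap.sum_apply, ContinuousLinearMap.add_apply,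
    ContinuousLinearMap.coe_smul', Pi.smul_apply, smul_eq_mul,
    ContinuousLinearMap.zero_apply] at this
  rw [← this]
  apply Finset.sum_congr rfl
  intro i _
  simp [pd]
  ring

lemma hasFDeriv_F2 {N : ℕ} {f : (Fin N → ℝ) → ℝ} (hf : ContDiff ℝ ∞ f)
    (z : (Fin N ⊕ Fin N) → ℝ) :
    HasFDerivAt (fun z => ∑ s, pd s f (Xc z) * z (Sum.inr s))
      (∑ s : Fin N, (pd s f (Xc z) • ContinuousLinearMap.proj (R := ℝ)
          (φ := fun _ : Fin N ⊕ Fin N => ℝ) (Sum.inr s)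
        + z (Sum.inr s) • ((fderiv ℝ (pd s f) (Xc z)).comp (XL N)))) z := by
  apply HasFDerivAt.fun_sum
  intro s _
  have hproj : HasFDerivAt (fun y : (Fin N ⊕ Fin N) → ℝ => y (Sum.inr s))
      (ContinuousLinearMap.proj (R := ℝ) (φ := fun _ : Fin N ⊕ Fin N => ℝ) (Sum.inr s)) z :=
    (ContinuousLinearMap.proj (R := ℝ) (φ := fun _ : Fin N ⊕ Fin N => ℝ) (Sum.inr s)).hasFDerivAt
  exact (hasFDeriv_comp_Xc ((contDiff_pd_s5 s hf).differentiable (by simp)) z).mul hproj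

lemma pd_F2_inl {N : ℕ} {f : (Fin N → ℝ) → ℝ} (hf : ContDiff ℝ ∞ f)
    (z : (Fin N ⊕ Fin N) → ℝ) (i : Fin N) :
    pd (Sum.inl i) (fun z => ∑ s, pd s f (Xc z) * z (Sum.inr s)) z
      = ∑ s, z (Sum.inr s) * pd i (pd s f) (Xc z) := by
  show fderiv ℝ _ z (Pi.single (Sum.inl i) 1) = _
  rw [(hasFDeriv_F2 hf z).fderiv]
  simp [XL_single_inl, Pi.single_apply, pd]

lemma pd_F2_inr {N : ℕ} {f : (Fin N → ℝ) → ℝ} (hf : ContDiff ℝ ∞ f)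
    (z : (Fin N ⊕ Fin N) → ℝ) (i : Fin N) :
    pd (Sum.inr i) (fun z => ∑ s, pd s f (Xc z) * z (Sum.inr s)) z
      = pd i f (Xc z) := by
  show fderiv ℝ _ z (Pi.single (Sum.inr i) 1) = _
  rw [(hasFDeriv_F2 hf z).fderiv]
  simp [XL_single_inr, Pi.single_apply]

lemma key1 {N : ℕ} {π : (Fin N → ℝ) → Matrix (Fin N) (Fin N) ℝ} {p : Fin N}
    {f : (Fin N → ℝ) → ℝ} (hf : ContDiff ℝ ∞ f)
    (hcas : ∀ x j, ∑ s, pd s f x * π x s j = 0)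
    (hfp : ∀ x, pd p f x = 0)
    (D : Matrix (Fin N) (Fin N) ℝ) (r : ℝ) (z : (Fin N ⊕ Fin N) → ℝ) (j : Fin N ⊕ Fin N) :
    ∑ s, pd s (fun z => f (Xc z)) z *
      (Matrix.fromBlocks 0 (π (Xc z) + r • Matrix.single p p (1:ℝ))
        (π (Xc z) - r • Matrix.single p p (1:ℝ)) D) s j = 0 := by
  have hfd : Differentiable ℝ f := hf.differentiable (by simp)
  rw [Fintype.sum_sum_type]
  cases j with
  | inl j =>
    simp [pd_comp_inr hfd]
  | inr j =>
    simp only [pd_comp_inl hfd, pd_comp_inr hfd, Matrix.fromBlocks_apply₁₂,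
      Matrix.fromBlocks_apply₂₂, zero_mul, Finset.sum_const_zero, add_zero,
      Matrix.add_apply, Matrix.smul_apply, Matrix.single, Matrix.of_apply,
      smul_eq_mul]
    rw [Finset.sum_congr rfl (fun i _ => mul_add (pd i f (Xc z)) _ _), Finset.sum_add_distrib,
      hcas (Xc z) j, zero_add]
    by_cases hj : p = j
    · subst hj
      rw [Finset.sum_eq_single p]
      · simp [hfp]
      · intro b _ hb; simp [(Ne.symm hb : ¬ p = b)]
      · simp
    · apply Finset.sum_eq_zero
      intro i _
      simp [hj]

lemma key2 {N : ℕ} {π : (Fin N → ℝ) → Matrix (Fin N) (Fin N) ℝ} {p : Fin N}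
    (hπs : ∀ i j, ContDiff ℝ ∞ fun x => π x i j)
    {f : (Fin N → ℝ) → ℝ} (hf : ContDiff ℝ ∞ f)
    (hcas : ∀ x j, ∑ s, pd s f x * π x s j = 0)
    (hfp : ∀ x, pd p f x = 0)
    (r : ℝ) (z : (Fin N ⊕ Fin N) → ℝ) (j : Fin N ⊕ Fin N) :
    ∑ s, pd s (fun z => ∑ t, pd t f (Xc z) * z (Sum.inr t)) z *
      (Matrix.fromBlocks 0 (π (Xc z) + r • Matrix.single p p (1:ℝ))
        (π (Xc z) - r • Matrix.single p p (1:ℝ))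
        (∑ s, Yc z s • pdMat s π (Xc z))) s j = 0 := by
  set x := Xc z with hx
  have hswap : ∀ i t : Fin N, pd i (pd t f) x = pd t (pd i f) x := pd_swap hf x
  have h2 : ∀ t : Fin N, pd t (pd p f) x = 0 := fun t => pd_zero_fun hfp t x
  rw [Fintype.sum_sum_type]
  cases j with
  | inl j =>
    -- columns inl j : first block column is (0, π - r E)
    simp only [pd_F2_inl hf, pd_F2_inr hf, Matrix.fromBlocks_apply₁₁, Matrix.fromBlocks_apply₂₁,
      Matrix.zero_apply, mul_zero, Finset.sum_const_zero, zero_add, Matrix.sub_apply,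
      Matrix.smul_apply, Matrix.single, Matrix.of_apply, smul_eq_mul]
    rw [Finset.sum_congr rfl (fun i _ => mul_sub (pd i f x) _ _), Finset.sum_sub_distrib,
      hcas x j, zero_sub, neg_eq_zero]
    by_cases hj : p = j
    · subst hj
      rw [Finset.sum_eq_single p]
      · simp [hfp]
      · intro b _ hb; simp [(Ne.symm hb : ¬ p = b)]
      · simp
    · apply Finset.sum_eq_zero
      intro i _
      simp [hj]
  | inr j =>
    simp only [pd_F2_inl hf, pd_F2_inr hf, Matrix.fromBlocks_apply₁₂, Matrix.fromBlocks_apply₂₂,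
      Matrix.add_apply, Matrix.smul_apply, Matrix.single, Matrix.of_apply, smul_eq_mul,
      Matrix.sum_apply, pdMat]
    have main : ∀ t : Fin N,
        ∑ i, (pd i (pd t f) x * (π x i j + r * (if p = i ∧ p = j then (1:ℝ) else 0))
          + pd i f x * pd t (fun y => π y i j) x) = 0 := by
      intro t
      have e1 : ∑ i, pd i (pd t f) x * (r * (if p = i ∧ p = j then (1:ℝ) else 0)) = 0 := by
        by_cases hj : p = j
        · subst hj
          rw [Finset.sum_eq_single p]
          · rw [hswap p t, h2 t]; ring
          · intro b _ hb; simp [(Ne.symm hb : ¬ p = b)]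
          · simp
        · apply Finset.sum_eq_zero; intro i _; simp [hj]
      have split : ∑ i, (pd i (pd t f) x * (π x i j + r * (if p = i ∧ p = j then (1:ℝ) else 0))
            + pd i f x * pd t (fun y => π y i j) x)
          = (∑ i, (pd t (pd i f) x * π x i j + pd i f x * pd t (fun y => π y i j) x))
            + ∑ i, pd i (pd t f) x * (r * (if p = i ∧ p = j then (1:ℝ) else 0)) := by
        rw [← Finset.sum_add_distrib]
        apply Finset.sum_congr rfl
        intro i _
        rw [hswap i t]
        ring
      rw [split, pd_casimir hπs hf hcas x t j, e1, add_zero]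
    -- now rearrange the double sums
    have lhs1 : ∑ i, (∑ t, z (Sum.inr t) * pd i (pd t f) x)
          * (π x i j + r * (if p = i ∧ p = j then (1:ℝ) else 0))
        = ∑ t, ∑ i, z (Sum.inr t) * (pd i (pd t f) x
          * (π x i j + r * (if p = i ∧ p = j then (1:ℝ) else 0))) := by
      rw [Finset.sum_comm]
      apply Finset.sum_congr rfl
      intro i _
      rw [Finset.sum_mul]
      apply Finset.sum_congr rfl
      intro t _
      ring
    have lhs2 : ∑ i, pd i f x * (∑ t, Yc z t * pd t (fun y => π y i j) x)
        = ∑ t, ∑ i, z (Sum.inr t) * (pd i f x * pd t (fun y => π y i j) x) := by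
      rw [Finset.sum_comm]
      apply Finset.sum_congr rfl
      intro i _
      rw [Finset.mul_sum]
      apply Finset.sum_congr rfl
      intro t _
      show pd i f x * (z (Sum.inr t) * _) = _
      ring
    rw [lhs1, lhs2, ← Finset.sum_add_distrib]
    apply Finset.sum_eq_zero
    intro t _
    rw [← Finset.sum_add_distrib]
    simp only [← mul_add, ← Finset.mul_sum]
    rw [main t, mul_zero]

/-- `F₁(x,y) = c'(x)` and `F₂(x,y) = ∑ s (∂c'/∂x_s)(x) y_s` are Casimir
functions for `Π_{TM,c(x)}`, and also for `Π_{TM,c(y)}` when `c` is linear. -/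
theorem stmt5 {N : ℕ} (hN : 1 ≤ N)
    (π : (Fin N → ℝ) → Matrix (Fin N) (Fin N) ℝ) (hπ : IsPoissonTensor π)
    (p : Fin N) (hp : ∀ x i j, pd p (fun y => π y i j) x = 0)
    (c : (Fin N → ℝ) → ℝ) (hc : IsCasimir π c)
    (c' : (Fin N → ℝ) → ℝ) (hc' : IsCasimir π c')
    (hc'p : ∀ x, pd p c' x = 0) :
    IsCasimir (tensorCX π p c) (fun z => c' (Xc z)) ∧
    IsCasimir (tensorCX π p c) (fun z => ∑ s, pd s c' (Xc z) * z (Sum.inr s)) ∧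
    (IsLinearFun c →
      IsCasimir (tensorCY π p c) (fun z => c' (Xc z)) ∧
      IsCasimir (tensorCY π p c) (fun z => ∑ s, pd s c' (Xc z) * z (Sum.inr s))) := by
  obtain ⟨hπs, hanti, hjac⟩ := hπ
  have hsm1 : ContDiff ℝ ∞ (fun z : (Fin N ⊕ Fin N) → ℝ => c' (Xc z)) := by
    have h := hc'.1.comp (XL N).contDiff
    simpa [Function.comp_def, ← Xc_eq] using h
  have hsm2 : ContDiff ℝ ∞
      (fun z : (Fin N ⊕ Fin N) → ℝ => ∑ s, pd s c' (Xc z) * z (Sum.inr s)) := by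
    apply ContDiff.sum
    intro s _
    have h1 : ContDiff ℝ ∞ (fun z : (Fin N ⊕ Fin N) → ℝ => pd s c' (Xc z)) := by
      have h := (contDiff_pd_s5 s hc'.1).comp (XL N).contDiff
      simpa [Function.comp_def, ← Xc_eq] using h
    exact h1.mul (ContinuousLinearMap.proj (R := ℝ)
      (φ := fun _ : Fin N ⊕ Fin N => ℝ) (Sum.inr s)).contDiff
  have HX1 : IsCasimir (tensorCX π p c) (fun z => c' (Xc z)) := by
    refine ⟨hsm1, fun z j => ?_⟩
    simpa only [tensorCX] using
      key1 hc'.1 hc'.2 hc'p (∑ s, Yc z s • pdMat s π (Xc z)) (c (Xc z)) z j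
  have HX2 : IsCasimir (tensorCX π p c)
      (fun z => ∑ s, pd s c' (Xc z) * z (Sum.inr s)) := by
    refine ⟨hsm2, fun z j => ?_⟩
    simpa only [tensorCX] using key2 hπs hc'.1 hc'.2 hc'p (c (Xc z)) z j
  refine ⟨HX1, HX2, fun _ => ⟨⟨hsm1, fun z j => ?_⟩, ⟨hsm2, fun z j => ?_⟩⟩⟩
  · simpa only [tensorCY] using
      key1 hc'.1 hc'.2 hc'p (∑ s, Yc z s • pdMat s π (Xc z)) (c (Yc z)) z j
  · simpa only [tensorCY] using key2 hπs hc'.1 hc'.2 hc'p (c (Yc z)) z j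
end

section
/- Let π be a linear Poisson tensor on ℝ^N that does not depend on the variable x_p for some fixed 1 ≤ p ≤ N, and let c be a linear Casimir function for π. Then for every λ ∈ ℝ the 2N×2N matrix field on ℝ^{2N} with blocks Π^{xx}(x,y) = λ·π(x), Π^{xy}(x,y) = π(x) + c(y)·E_pp, Π^{yx}(x,y) = π(x) − c(y)·E_pp, Π^{yy}(x,y) = π(y) is a Poisson tensor on ℝ^{2N}. -/
open scoped ContDiff

/-- A linear (Lie–Poisson) tensor: `π_{ij}(x) = ∑ n, c^n_{ij} x_n`. -/
def IsLinearTensor {N : ℕ} (π : (Fin N → ℝ) → Matrix (Fin N) (Fin N) ℝ) : Prop :=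
  ∃ C : Fin N → Fin N → Fin N → ℝ, ∀ x i j, π x i j = ∑ n, C i j n * x n

noncomputable def linCLM {ι : Type} [Fintype ι] [DecidableEq ι] (A : ι → ℝ) :
    (ι → ℝ) →L[ℝ] ℝ :=
  ∑ n, A n • (ContinuousLinearMap.proj n : (ι → ℝ) →L[ℝ] ℝ)

lemma linCLM_apply {ι : Type} [Fintype ι] [DecidableEq ι] (A : ι → ℝ) (x : ι → ℝ) :
    linCLM A x = ∑ n, A n * x n := by
  simp [linCLM, ContinuousLinearMap.sum_apply, ContinuousLinearMap.proj_apply]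

lemma eq_linCLM {ι : Type} [Fintype ι] [DecidableEq ι] {A : ι → ℝ} {f : (ι → ℝ) → ℝ}
    (hf : ∀ x, f x = ∑ n, A n * x n) : f = ⇑(linCLM A) :=
  funext fun x => (hf x).trans (linCLM_apply A x).symm

lemma pd_eq_coeff {ι : Type} [Fintype ι] [DecidableEq ι] {A : ι → ℝ} {f : (ι → ℝ) → ℝ}
    (hf : ∀ x, f x = ∑ n, A n * x n) (s : ι) (x : ι → ℝ) : pd s f x = A s := by
  rw [pd, eq_linCLM hf, ContinuousLinearMap.fderiv, linCLM_apply]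
  simp [Pi.single_apply, mul_ite, Finset.sum_ite_eq']

lemma contDiff_coeff {ι : Type} [Fintype ι] [DecidableEq ι] {A : ι → ℝ} {f : (ι → ℝ) → ℝ}
    (hf : ∀ x, f x = ∑ n, A n * x n) : ContDiff ℝ ∞ f := by
  rw [eq_linCLM hf]; exact (linCLM A).contDiff

/-- Coefficients of the big linear tensor. -/
def coeffA {N : ℕ} (C : Fin N → Fin N → Fin N → ℝ) (a : Fin N → ℝ) (p : Fin N) (lam : ℝ) :
    (Fin N ⊕ Fin N) → (Fin N ⊕ Fin N) → (Fin N ⊕ Fin N) → ℝ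
  | .inl i, .inl j, .inl n => lam * C i j n
  | .inl _, .inl _, .inr _ => 0
  | .inl i, .inr j, .inl n => C i j n
  | .inl i, .inr j, .inr n => a n * (if p = i ∧ p = j then 1 else 0)
  | .inr i, .inl j, .inl n => C i j n
  | .inr i, .inl j, .inr n => -(a n) * (if p = i ∧ p = j then 1 else 0)
  | .inr _, .inr _, .inl _ => 0
  | .inr i, .inr j, .inr n => C i j n

/-- for a linear Poisson tensor `π` independent of `x_p` and a linear
Casimir `c`, the tensor `[[λπ(x), π(x)+c(y)E_pp],[π(x)−c(y)E_pp, π(y)]]` is Poisson. -/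
theorem stmt10 {N : ℕ} (hN : 1 ≤ N)
    (π : (Fin N → ℝ) → Matrix (Fin N) (Fin N) ℝ)
    (hπ : IsPoissonTensor π) (hlin : IsLinearTensor π)
    (p : Fin N) (hp : ∀ x i j, pd p (fun y => π y i j) x = 0)
    (c : (Fin N → ℝ) → ℝ) (hc : IsCasimir π c) (hclin : IsLinearFun c)
    (lam : ℝ) :
    IsPoissonTensor (fun z : (Fin N ⊕ Fin N) → ℝ =>
      Matrix.fromBlocks
        (lam • π (Xc z))
        (π (Xc z) + c (Yc z) • Matrix.single p p (1 : ℝ))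
        (π (Xc z) - c (Yc z) • Matrix.single p p (1 : ℝ))
        (π (Yc z))) := by
  obtain ⟨hsm, hanti, hjac⟩ := hπ
  obtain ⟨C, hC⟩ := hlin
  obtain ⟨a, ha⟩ := hclin
  obtain ⟨-, hcas⟩ := hc
  have pdπ : ∀ (s : Fin N) (x : Fin N → ℝ) (i j : Fin N),
      pd s (fun y => π y i j) x = C i j s :=
    fun s x i j => pd_eq_coeff (fun y => hC y i j) s x
  have hCp : ∀ i j, C i j p = 0 := fun i j => (pdπ p 0 i j).symm.trans (hp 0 i j)
  have hCanti : ∀ i j n, C j i n = - C i j n := by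
    intro i j n
    have h1 := hC (Pi.single n 1) j i
    have h2 := hC (Pi.single n 1) i j
    have h3 := hanti (Pi.single n 1) i j
    simp only [Pi.single_apply, mul_ite, mul_one, mul_zero, Finset.sum_ite_eq'] at h1 h2
    simp at h1 h2
    rw [h1, h2] at h3
    exact h3
  have jac' : ∀ (x : Fin N → ℝ) (i j k : Fin N),
      ∑ s, (C i j s * π x s k + C k i s * π x s j + C j k s * π x s i) = 0 := by
    intro x i j k
    have h := hjac x i j k
    simpa only [pdπ] using h
  have cas' : ∀ (x : Fin N → ℝ) (j : Fin N), ∑ s, a s * π x s j = 0 := by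
    intro x j
    have h := hcas x j
    simpa only [pd_eq_coeff ha] using h
  have sum_std : ∀ (f : Fin N → ℝ) (k : Fin N),
      (∑ s, f s * (if p = s ∧ p = k then (1:ℝ) else 0)) = (if p = k then f p else 0) := by
    intro f k
    by_cases hk : p = k <;> simp [hk, mul_ite, Finset.sum_ite_eq]
  set Q : ((Fin N ⊕ Fin N) → ℝ) → Matrix (Fin N ⊕ Fin N) (Fin N ⊕ Fin N) ℝ :=
    fun z => Matrix.fromBlocks
        (lam • π (Xc z))
        (π (Xc z) + c (Yc z) • Matrix.single p p (1 : ℝ))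
        (π (Xc z) - c (Yc z) • Matrix.single p p (1 : ℝ))
        (π (Yc z)) with hQ
  have hstd : ∀ i j : Fin N, Matrix.single p p (1:ℝ) i j
      = if p = i ∧ p = j then 1 else 0 := fun i j => rfl
  have hent : ∀ (z : (Fin N ⊕ Fin N) → ℝ) (I J : Fin N ⊕ Fin N),
      Q z I J = ∑ σ, coeffA C a p lam I J σ * z σ := by
    intro z I J
    rcases I with i | i <;> rcases J with j | j <;>
      simp only [hQ, Matrix.fromBlocks_apply₁₁, Matrix.fromBlocks_apply₁₂,
        Matrix.fromBlocks_apply₂₁, Matrix.fromBlocks_apply₂₂,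
        Matrix.add_apply, Matrix.sub_apply, Matrix.smul_apply, smul_eq_mul,
        hC, ha, hstd, coeffA, Fintype.sum_sum_type, Xc, Yc,
        zero_mul, Finset.sum_const_zero, add_zero, zero_add]
    · rw [Finset.mul_sum]
      exact Finset.sum_congr rfl fun n _ => by ring
    · congr 1
      rw [Finset.sum_mul]
      exact Finset.sum_congr rfl fun n _ => by ring
    · rw [sub_eq_add_neg]
      congr 1
      rw [Finset.sum_mul, ← Finset.sum_neg_distrib]
      exact Finset.sum_congr rfl fun n _ => by ring
  have hpd : ∀ (I J σ : Fin N ⊕ Fin N) (z : (Fin N ⊕ Fin N) → ℝ),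
      pd σ (fun w => Q w I J) z = coeffA C a p lam I J σ :=
    fun I J σ z => pd_eq_coeff (fun w => hent w I J) σ z
  have hAanti : ∀ I J σ, coeffA C a p lam J I σ = - coeffA C a p lam I J σ := by
    intro I J σ
    rcases I with i | i <;> rcases J with j | j <;> rcases σ with n | n <;>
      simp only [coeffA] <;>
      first
        | (rw [hCanti]; try ring)
        | (by_cases h1 : p = i <;> by_cases h2 : p = j <;> simp [h1, h2] <;>
            try (split_ifs <;> try ring))
        | simp
  have hQll : ∀ (z : (Fin N ⊕ Fin N) → ℝ) (s k : Fin N),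
      Q z (Sum.inl s) (Sum.inl k) = lam * π (Xc z) s k := by
    intro z s k; simp [hQ]
  have hQlr : ∀ (z : (Fin N ⊕ Fin N) → ℝ) (s k : Fin N),
      Q z (Sum.inl s) (Sum.inr k)
        = π (Xc z) s k + c (Yc z) * (if p = s ∧ p = k then 1 else 0) := by
    intro z s k; simp [hQ, hstd, Matrix.single, Matrix.of_apply]
  have hQrl : ∀ (z : (Fin N ⊕ Fin N) → ℝ) (s k : Fin N),
      Q z (Sum.inr s) (Sum.inl k)
        = π (Xc z) s k - c (Yc z) * (if p = s ∧ p = k then 1 else 0) := by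
    intro z s k; simp [hQ, hstd, Matrix.single, Matrix.of_apply]
  have hQrr : ∀ (z : (Fin N ⊕ Fin N) → ℝ) (s k : Fin N),
      Q z (Sum.inr s) (Sum.inr k) = π (Yc z) s k := by
    intro z s k; simp [hQ]
  refine ⟨?_, ?_, ?_⟩
  · intro I J
    exact contDiff_coeff (fun w => hent w I J)
  · intro z I J
    rw [hent, hent, ← Finset.sum_neg_distrib]
    exact Finset.sum_congr rfl fun σ _ => by rw [hAanti]; ring
  · intro z I J K
    simp only [hpd]
    have hrot : ∀ I J K : Fin N ⊕ Fin N,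
        (∑ σ, (coeffA C a p lam I J σ * Q z σ K + coeffA C a p lam K I σ * Q z σ J
            + coeffA C a p lam J K σ * Q z σ I))
        = (∑ σ, (coeffA C a p lam J K σ * Q z σ I + coeffA C a p lam I J σ * Q z σ K
            + coeffA C a p lam K I σ * Q z σ J)) :=
      fun I J K => Finset.sum_congr rfl fun σ _ => by ring
    have Hlll : ∀ i j k : Fin N,
        (∑ σ, (coeffA C a p lam (Sum.inl i) (Sum.inl j) σ * Q z σ (Sum.inl k)
            + coeffA C a p lam (Sum.inl k) (Sum.inl i) σ * Q z σ (Sum.inl j)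
            + coeffA C a p lam (Sum.inl j) (Sum.inl k) σ * Q z σ (Sum.inl i))) = 0 := by
      intro i j k
      simp only [Fintype.sum_sum_type, coeffA, hQll, hQlr, hQrl, hQrr,
        zero_mul, add_zero, zero_add, Finset.sum_const_zero]
      rw [Finset.sum_congr rfl (fun s _ => show
        lam * C i j s * (lam * π (Xc z) s k) + lam * C k i s * (lam * π (Xc z) s j)
          + lam * C j k s * (lam * π (Xc z) s i)
        = (lam * lam) * (C i j s * π (Xc z) s k + C k i s * π (Xc z) s j
          + C j k s * π (Xc z) s i) from by ring), ← Finset.mul_sum, jac', mul_zero]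
    have Hllr : ∀ i j k : Fin N,
        (∑ σ, (coeffA C a p lam (Sum.inl i) (Sum.inl j) σ * Q z σ (Sum.inr k)
            + coeffA C a p lam (Sum.inr k) (Sum.inl i) σ * Q z σ (Sum.inl j)
            + coeffA C a p lam (Sum.inl j) (Sum.inr k) σ * Q z σ (Sum.inl i))) = 0 := by
      intro i j k
      simp only [Fintype.sum_sum_type, coeffA, hQll, hQlr, hQrl, hQrr,
        zero_mul, add_zero, zero_add, Finset.sum_const_zero]
      trans (∑ s : Fin N,
        (lam * (C i j s * π (Xc z) s k + C k i s * π (Xc z) s j + C j k s * π (Xc z) s i)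
        + (lam * c (Yc z)) * (C i j s * (if p = s ∧ p = k then 1 else 0))
        + (-(if p = k ∧ p = i then (1:ℝ) else 0)) * (a s * π (Xc z) s j)
        + ((if p = j ∧ p = k then (1:ℝ) else 0)) * (a s * π (Xc z) s i)
        + (c (Yc z) * (if p = k ∧ p = i then 1 else 0)) * (a s * (if p = s ∧ p = j then 1 else 0))
        + (-(c (Yc z) * (if p = j ∧ p = k then 1 else 0))) * (a s * (if p = s ∧ p = i then 1 else 0))))
      · rw [← Finset.sum_add_distrib]
        exact Finset.sum_congr rfl fun s _ => by ring
      · simp only [Finset.sum_add_distrib]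
        simp only [← Finset.mul_sum]
        rw [jac', cas', cas', sum_std, sum_std, sum_std]
        simp only [hCp]
        by_cases h1 : p = i <;> by_cases h2 : p = j <;> by_cases h3 : p = k <;>
          (try subst h1) <;> (try subst h2) <;> (try subst h3) <;> simp [*] <;> try ring
    have Hlrr : ∀ i j k : Fin N,
        (∑ σ, (coeffA C a p lam (Sum.inl i) (Sum.inr j) σ * Q z σ (Sum.inr k)
            + coeffA C a p lam (Sum.inr k) (Sum.inl i) σ * Q z σ (Sum.inr j)
            + coeffA C a p lam (Sum.inr j) (Sum.inr k) σ * Q z σ (Sum.inl i))) = 0 := by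
      intro i j k
      simp only [Fintype.sum_sum_type, coeffA, hQll, hQlr, hQrl, hQrr,
        zero_mul, add_zero, zero_add, Finset.sum_const_zero]
      trans (∑ s : Fin N,
        ((C i j s * π (Xc z) s k + C k i s * π (Xc z) s j + C j k s * π (Xc z) s i)
        + (c (Yc z)) * (C i j s * (if p = s ∧ p = k then 1 else 0))
        + (c (Yc z)) * (C k i s * (if p = s ∧ p = j then 1 else 0))
        + (-(c (Yc z))) * (C j k s * (if p = s ∧ p = i then 1 else 0))
        + ((if p = i ∧ p = j then (1:ℝ) else 0)) * (a s * π (Yc z) s k)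
        + (-(if p = k ∧ p = i then (1:ℝ) else 0)) * (a s * π (Yc z) s j)))
      · rw [← Finset.sum_add_distrib]
        exact Finset.sum_congr rfl fun s _ => by ring
      · simp only [Finset.sum_add_distrib]
        simp only [← Finset.mul_sum]
        rw [← Finset.sum_add_distrib, ← Finset.sum_add_distrib,
          jac', cas', cas', sum_std, sum_std, sum_std]
        simp only [hCp]
        by_cases h1 : p = i <;> by_cases h2 : p = j <;> by_cases h3 : p = k <;>
          (try subst h1) <;> (try subst h2) <;> (try subst h3) <;> simp [*] <;> try ring
    have Hrrr : ∀ i j k : Fin N,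
        (∑ σ, (coeffA C a p lam (Sum.inr i) (Sum.inr j) σ * Q z σ (Sum.inr k)
            + coeffA C a p lam (Sum.inr k) (Sum.inr i) σ * Q z σ (Sum.inr j)
            + coeffA C a p lam (Sum.inr j) (Sum.inr k) σ * Q z σ (Sum.inr i))) = 0 := by
      intro i j k
      simp only [Fintype.sum_sum_type, coeffA, hQll, hQlr, hQrl, hQrr,
        zero_mul, add_zero, zero_add, Finset.sum_const_zero]
      exact jac' (Yc z) i j k
    rcases I with i | i <;> rcases J with j | j <;> rcases K with k | k
    · exact Hlll i j k
    · exact Hllr i j k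
    · exact (hrot _ _ _).trans ((hrot _ _ _).trans (Hllr k i j))
    · exact Hlrr i j k
    · exact (hrot _ _ _).trans (Hllr j k i)
    · exact (hrot _ _ _).trans (Hlrr j k i)
    · exact (hrot _ _ _).trans ((hrot _ _ _).trans (Hlrr k i j))
    · exact Hrrr i j k
end
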